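/- Let I ⊆ k[x₁,…,xₙ] be a binomial ideal (generated by binomials, with k[x]/I reduced, and satisfying: xᵢf ∈ I implies f ∈ I). Let X = V(I) ⊆ 𝔸ⁿ. Then X ∩ 𝕋ⁿ is Zariski dense in X, where 𝕋ⁿ = {x : all xᵢ ≠ 0}. -/

import Mathlib

/-- For a binomial ideal `I ⊆ k[x₁,…,xₙ]` (generated by binomials, radical,
and saturated with respect to each variable), the torus part `X ∩ 𝕋ⁿ` is dense in
`X = V(I)`: the basic open set of `Spec k[x]/I` where `x₁⋯xₙ` is invertible is dense. -/
theorem binomial_variety_torus_dense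
    {k : Type*} [Field k] (n : ℕ) (I : Ideal (MvPolynomial (Fin n) k))
    (hbin : ∃ S : Set (MvPolynomial (Fin n) k),
      I = Ideal.span S ∧
      ∀ g ∈ S, ∃ α β : Fin n →₀ ℕ,
        g = MvPolynomial.monomial α 1 - MvPolynomial.monomial β 1)
    (hred : I.IsRadical)
    (hsat : ∀ (f : MvPolynomial (Fin n) k) (i : Fin n), MvPolynomial.X i * f ∈ I → f ∈ I) :
    closure ((PrimeSpectrum.basicOpen
        (Ideal.Quotient.mk I (∏ i, MvPolynomial.X i)) :
        TopologicalSpace.Opens (PrimeSpectrum (MvPolynomial (Fin n) k ⧸ I))) :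
        Set (PrimeSpectrum (MvPolynomial (Fin n) k ⧸ I)))
      = Set.univ := by
  classical
  set R := MvPolynomial (Fin n) k ⧸ I
  haveI : IsReduced R := (Ideal.isRadical_iff_quotient_reduced I).mp hred
  set f : R := Ideal.Quotient.mk I (∏ i, MvPolynomial.X i) with hf
  -- f is a nonzerodivisor in R
  have hsatProd : ∀ (s : Finset (Fin n)) (g : MvPolynomial (Fin n) k),
      (∏ i ∈ s, MvPolynomial.X i) * g ∈ I → g ∈ I := by
    intro s
    induction s using Finset.induction with
    | empty => intro g hg; simpa using hg
    | insert _ _ hx ih =>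
      intro g hg
      rw [Finset.prod_insert hx, mul_assoc] at hg
      exact ih _ (hsat _ _ hg)
  have hnzd : ∀ q : R, f * q = 0 → q = 0 := by
    intro q hq
    obtain ⟨g, rfl⟩ := Ideal.Quotient.mk_surjective q
    rw [hf, ← map_mul, Ideal.Quotient.eq_zero_iff_mem] at hq
    rw [Ideal.Quotient.eq_zero_iff_mem]
    exact hsatProd Finset.univ g hq
  rw [← PrimeSpectrum.zeroLocus_vanishingIdeal_eq_closure]
  have hvan : PrimeSpectrum.vanishingIdeal
      ((PrimeSpectrum.basicOpen f : TopologicalSpace.Opens (PrimeSpectrum R)) :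
        Set (PrimeSpectrum R)) = ⊥ := by
    rw [eq_bot_iff]
    intro g hg
    rw [PrimeSpectrum.mem_vanishingIdeal] at hg
    -- g * f is in every prime ideal, hence nilpotent, hence 0
    have hgf : IsNilpotent (g * f) := by
      rw [nilpotent_iff_mem_prime]
      intro p hp
      haveI : p.IsPrime := hp
      by_cases hfp : f ∈ p
      · exact Ideal.mul_mem_left p g hfp
      · have := hg ⟨p, this⟩ (by
          simpa [PrimeSpectrum.mem_basicOpen] using hfp)
        exact Ideal.mul_mem_right f p this
    have hgf : g * f = 0 := hgf.eq_zero
    have : g = 0 := hnzd g (by rw [mul_comm]; exact hgf)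
    simp [this]
  rw [hvan]
  simpa using PrimeSpectrum.zeroLocus_bot
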